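/- Define S_n = sum_{k=0}^{n-3} (-1)^k * C(2k,k) * C(n-3,k) * C(k, n-k-3) for n >= 3 (and S_n = 0 for n < 3). Then for every non-negative integer n, S_{4n+2} ≡ 0 (mod 4). -/
import Mathlib

open Finset

private lemma s2_pos {x : ℕ} (hx : 0 < x) : 0 < (Nat.digits 2 x).sum := by
  induction x using Nat.strong_induction_on with
  | _ x ih =>
    rw [Nat.digits_def' (by norm_num : 1 < 2) hx]
    simp only [List.sum_cons]
    rcases Nat.eq_zero_or_pos (x / 2) with h | h
    · have : x % 2 = 1 := by omega
      omega
    · have := ih (x / 2) (Nat.div_lt_self hx one_lt_two) h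
      omega

private lemma s2_two_mul {k : ℕ} (hk : 0 < k) :
    (Nat.digits 2 (2 * k)).sum = (Nat.digits 2 k).sum := by
  rw [Nat.digits_def' (by norm_num : 1 < 2) (by omega)]
  simp [Nat.mul_div_cancel_left _ two_pos]

private lemma v_central {k : ℕ} (hk : 0 < k) :
    padicValNat 2 ((2 * k).choose k) = (Nat.digits 2 k).sum := by
  have h := @sub_one_mul_padicValNat_choose_eq_sub_sum_digits 2 k (2 * k) ⟨Nat.prime_two⟩
    (by omega)
  have h2 : 2 * k - k = k := by omega
  rw [h2, s2_two_mul hk] at h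
  omega

private lemma key {m k : ℕ} (hm : Odd m) (h3 : 3 ≤ m) (hk : k ≤ m) :
    4 ∣ (2 * k).choose k * k.choose (m - k) := by
  rcases lt_or_ge k (m - k) with hlt | hle
  · rw [Nat.choose_eq_zero_of_lt hlt, mul_zero]
    exact dvd_zero _
  · have hk0 : 0 < k := by omega
    have ha : (2 * k).choose k ≠ 0 := (Nat.choose_pos (by omega)).ne'
    have hb : k.choose (m - k) ≠ 0 := (Nat.choose_pos hle).ne'
    have hv : 2 ≤ padicValNat 2 ((2 * k).choose k * k.choose (m - k)) := by
      have hmul := @padicValNat.mul 2 _ _ ⟨Nat.prime_two⟩ ha hb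
      have hvb := @sub_one_mul_padicValNat_choose_eq_sub_sum_digits 2 (m - k) k
        ⟨Nat.prime_two⟩ hle
      have hva := v_central hk0
      have hX : 2 ≤ (Nat.digits 2 (m - k)).sum + (Nat.digits 2 (k - (m - k))).sum := by
        rcases Nat.eq_zero_or_pos (m - k) with h1 | h1
        · have hkm : k - (m - k) = m := by omega
          have hm2 : 0 < m / 2 := by omega
          have hsm : 2 ≤ (Nat.digits 2 m).sum := by
            have := s2_pos hm2
            rw [Nat.digits_def' (by norm_num : 1 < 2) (by omega : 0 < m)]
            have hm1 : m % 2 = 1 := Nat.odd_iff.mp hm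
            simp only [List.sum_cons, hm1]
            omega
          rw [hkm]; omega
        · rcases Nat.eq_zero_or_pos (k - (m - k)) with h2 | h2
          · have : m = 2 * k := by omega
            have := Nat.odd_iff.mp hm
            omega
          · have := s2_pos h1
            have := s2_pos h2
            omega
      omega
    calc (4 : ℕ) = 2 ^ 2 := by norm_num
    _ ∣ 2 ^ padicValNat 2 ((2 * k).choose k * k.choose (m - k)) := pow_dvd_pow 2 hv
    _ ∣ _ := pow_padicValNat_dvd

/-- `S n = ∑_{k=0}^{n-3} (-1)^k C(2k,k) C(n-3,k) C(k, n-k-3)`, with `S n = 0` for `n < 3`. -/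
def S (n : ℕ) : ℤ :=
  ∑ k ∈ Finset.range (n - 2),
    (-1) ^ k * ((2 * k).choose k : ℤ) * ((n - 3).choose k : ℤ) * (k.choose (n - k - 3) : ℤ)

theorem stmt_10 (n : ℕ) : (4 : ℤ) ∣ S (4 * n + 2) := by
  rcases Nat.eq_zero_or_pos n with rfl | hn
  · simp [S]
  · unfold S
    apply Finset.dvd_sum
    intro k hk
    rw [Finset.mem_range] at hk
    have hk' : k ≤ 4 * n - 1 := by omega
    have h1 : 4 * n + 2 - 3 = 4 * n - 1 := by omega
    have h2 : 4 * n + 2 - k - 3 = 4 * n - 1 - k := by omega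
    rw [h1, h2]
    have hkey := key (m := 4 * n - 1) (k := k) (by rw [Nat.odd_iff]; omega) (by omega) hk'
    have hz : (4 : ℤ) ∣ ((2 * k).choose k : ℤ) * (k.choose (4 * n - 1 - k) : ℤ) := by
      exact_mod_cast Int.natCast_dvd_natCast.mpr hkey
    have heq : (-1 : ℤ) ^ k * ((2 * k).choose k : ℤ) * ((4 * n - 1).choose k : ℤ) *
        (k.choose (4 * n - 1 - k) : ℤ) =
        ((-1) ^ k * ((4 * n - 1).choose k : ℤ)) *
        (((2 * k).choose k : ℤ) * (k.choose (4 * n - 1 - k) : ℤ)) := by ring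
    rw [heq]
    exact hz.mul_left _
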